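/- Let Y_1, …, Y_m be jointly independent real-valued random variables, let α > 0, let ℓ : (0,∞) → (0,∞) be a measurable slowly varying function (ℓ(cx)/ℓ(x) → 1 as x → ∞ for every c > 0), and let c_1, …, c_m > 0 be such that P(Y_h > x)/(ℓ(x) x^{−α}) → c_h as x → ∞ for each h. Then for any positive coefficients β_1, …, β_m > 0, P(Σ_{h=1}^m β_h Y_h > x) / (ℓ(x) x^{−α}) → Σ_{h=1}^m c_h β_h^α as x → ∞. -/

import Mathlib

open MeasureTheory ProbabilityTheory Filter Set
open scoped ProbabilityTheory

section Auxiliary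

variable {Ω : Type*} [MeasurableSpace Ω]

/-- tail of any r.v. tends to 0 -/
lemma aux_tail_zero (μ : Measure Ω) [IsProbabilityMeasure μ] {X : Ω → ℝ} (hX : Measurable X) :
    Tendsto (fun x : ℝ => (μ {ω | x < X ω}).toReal) atTop (nhds 0) := by
  have hiic : Tendsto (fun x : ℝ => ((μ.map X) (Iic x)).toReal) atTop (nhds 1) := by
    have h := tendsto_measure_Iic_atTop (μ.map X)
    have hμu : (μ.map X) univ = 1 := by
      haveI : IsProbabilityMeasure (μ.map X) := Measure.isProbabilityMeasure_map hX.aemeasurable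
      simp
    rw [hμu] at h
    have := (ENNReal.tendsto_toReal (by simp : (1:ENNReal) ≠ ⊤)).comp h
    simpa [Function.comp_def] using this
  have heq : ∀ x : ℝ, (μ {ω | x < X ω}).toReal = 1 - ((μ.map X) (Iic x)).toReal := by
    intro x
    rw [Measure.map_apply hX measurableSet_Iic]
    have hc : {ω | x < X ω} = (X ⁻¹' Iic x)ᶜ := by
      ext ω; simp [not_le]
    rw [hc, prob_compl_eq_one_sub (hX measurableSet_Iic)]
    rw [ENNReal.toReal_sub_of_le prob_le_one (by simp)]
    simp
  simp only [heq]
  have := tendsto_const_nhds (x := (1:ℝ)) (f := atTop (α := ℝ)) |>.sub hiic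
  simpa using this

/-- lower tail tends to 1 at -∞ -/
lemma aux_low_one (μ : Measure Ω) [IsProbabilityMeasure μ] {X : Ω → ℝ} (hX : Measurable X) :
    Tendsto (fun y : ℝ => (μ {ω | y < X ω}).toReal) atBot (nhds 1) := by
  have hici : Tendsto (fun y : ℝ => ((μ.map X) (Ici y)).toReal) atBot (nhds 1) := by
    have h := tendsto_measure_Ici_atBot (μ.map X)
    have hμu : (μ.map X) univ = 1 := by
      haveI : IsProbabilityMeasure (μ.map X) := Measure.isProbabilityMeasure_map hX.aemeasurable
      simp
    rw [hμu] at h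
    have := (ENNReal.tendsto_toReal (by simp : (1:ENNReal) ≠ ⊤)).comp h
    simpa [Function.comp_def] using this
  -- squeeze: (μ.map X (Ici (y+1))).toReal ≤ (μ {y < X}).toReal ≤ 1
  have hle : ∀ y : ℝ, ((μ.map X) (Ici (y+1))).toReal ≤ (μ {ω | y < X ω}).toReal := by
    intro y
    rw [Measure.map_apply hX measurableSet_Ici]
    apply ENNReal.toReal_mono (measure_ne_top _ _)
    apply measure_mono
    intro ω hω
    simp only [mem_preimage, mem_Ici] at hω
    simp only [mem_setOf_eq]; linarith
  have hub : ∀ y : ℝ, (μ {ω | y < X ω}).toReal ≤ 1 := by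
    intro y
    simpa using ENNReal.toReal_mono (by simp) (prob_le_one (μ := μ) (s := {ω | y < X ω}))
  have h1 : Tendsto (fun y : ℝ => ((μ.map X) (Ici (y+1))).toReal) atBot (nhds 1) :=
    hici.comp (tendsto_atBot_add_const_right _ 1 tendsto_id)
  exact tendsto_of_tendsto_of_tendsto_of_le_of_le h1 tendsto_const_nhds hle hub

/-- ratio of the regularly varying normalizer -/
lemma aux_ratio (α : ℝ) (ℓ : ℝ → ℝ) (hℓpos : ∀ x : ℝ, 0 < x → 0 < ℓ x)
    (hslow : ∀ d : ℝ, 0 < d → Tendsto (fun x : ℝ => ℓ (d * x) / ℓ x) atTop (nhds 1))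
    {d : ℝ} (hd : 0 < d) :
    Tendsto (fun x : ℝ => (ℓ (d*x) * (d*x) ^ (-α)) / (ℓ x * x ^ (-α))) atTop
      (nhds (d ^ (-α))) := by
  have h1 : Tendsto (fun x : ℝ => (ℓ (d*x) / ℓ x) * d ^ (-α)) atTop (nhds (d ^ (-α))) := by
    simpa using (hslow d hd).mul_const (d ^ (-α))
  refine h1.congr' ?_
  filter_upwards [eventually_gt_atTop (0:ℝ)] with x hx
  have hℓx := hℓpos x hx
  have hxp : (0:ℝ) < x ^ (-α) := Real.rpow_pos_of_pos hx _
  rw [Real.mul_rpow hd.le hx.le]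
  field_simp

variable {Ω : Type*} [MeasurableSpace Ω]

/-- scaling the threshold inside a regularly varying tail -/
lemma aux_tail_scaled (μ : Measure Ω) (Z : Ω → ℝ) (α : ℝ)
    (ℓ : ℝ → ℝ) (hℓpos : ∀ x : ℝ, 0 < x → 0 < ℓ x)
    (hslow : ∀ d : ℝ, 0 < d → Tendsto (fun x : ℝ => ℓ (d * x) / ℓ x) atTop (nhds 1))
    (c : ℝ)
    (hT : Tendsto (fun x : ℝ => (μ {ω | x < Z ω}).toReal / (ℓ x * x ^ (-α))) atTop (nhds c))
    {d : ℝ} (hd : 0 < d) :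
    Tendsto (fun x : ℝ => (μ {ω | d * x < Z ω}).toReal / (ℓ x * x ^ (-α))) atTop
      (nhds (c * d ^ (-α))) := by
  have hdx : Tendsto (fun x : ℝ => d * x) atTop atTop := tendsto_id.const_mul_atTop hd
  have h1 : Tendsto (fun x : ℝ => (μ {ω | d*x < Z ω}).toReal / (ℓ (d*x) * (d*x) ^ (-α)))
      atTop (nhds c) := hT.comp hdx
  have h2 := aux_ratio α ℓ hℓpos hslow hd
  refine (h1.mul h2).congr' ?_
  filter_upwards [eventually_gt_atTop (0:ℝ)] with x hx
  have hdxp : (0:ℝ) < d * x := by positivity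
  have hne : ℓ (d*x) * (d*x) ^ (-α) ≠ 0 := by
    have := hℓpos _ hdxp
    have := Real.rpow_pos_of_pos hdxp (-α)
    positivity
  field_simp
  rw [mul_comm (ℓ (d*x)) (ℓ x), mul_div_mul_right _ _ (hℓpos _ hdxp).ne']

variable {Ω : Type*} [MeasurableSpace Ω]

lemma aux_cont (L α s : ℝ) :
    Tendsto (fun e : ℝ => L * (1 + s * e) ^ (-α)) (nhds 0) (nhds L) := by
  have h1 : Tendsto (fun e : ℝ => 1 + s * e) (nhds 0) (nhds 1) := by
    have : Continuous (fun e : ℝ => 1 + s * e) := by continuity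
    simpa using this.tendsto 0
  have h2 : Tendsto (fun y : ℝ => y ^ (-α)) (nhds 1) (nhds 1) := by
    have := (Real.continuousAt_rpow_const 1 (-α) (Or.inl one_ne_zero)).tendsto
    simpa [Real.one_rpow] using this
  have := (tendsto_const_nhds (x := L)).mul (h2.comp h1)
  simpa using this

/-- core two-variable lemma -/
lemma aux_two (μ : Measure Ω) [IsProbabilityMeasure μ]
    (X Z : Ω → ℝ) (hXm : Measurable X) (hZm : Measurable Z)
    (hind : ProbabilityTheory.IndepFun X Z μ)
    (α : ℝ) (hα : 0 < α)
    (ℓ : ℝ → ℝ) (hℓpos : ∀ x : ℝ, 0 < x → 0 < ℓ x)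
    (hslow : ∀ d : ℝ, 0 < d → Tendsto (fun x : ℝ => ℓ (d * x) / ℓ x) atTop (nhds 1))
    (a b : ℝ)
    (hXt : Tendsto (fun x : ℝ => (μ {ω | x < X ω}).toReal / (ℓ x * x ^ (-α))) atTop (nhds a))
    (hZt : Tendsto (fun x : ℝ => (μ {ω | x < Z ω}).toReal / (ℓ x * x ^ (-α))) atTop (nhds b)) :
    Tendsto (fun x : ℝ => (μ {ω | x < X ω + Z ω}).toReal / (ℓ x * x ^ (-α))) atTop
      (nhds (a + b)) := by
  refine tendsto_order.2 ⟨?_, ?_⟩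
  · -- lower bound: ∀ r < a+b, eventually r < g x
    intro r hr
    -- pick ε > 0 with r < (a+b) * (1+ε)^(-α)
    have hc : Tendsto (fun e : ℝ => (a+b) * (1 + 1 * e) ^ (-α)) (nhdsWithin (0:ℝ) (Ioi (0:ℝ))) (nhds (a+b)) :=
      (aux_cont (a+b) α 1).mono_left nhdsWithin_le_nhds
    have hev1 : ∀ᶠ e in nhdsWithin (0:ℝ) (Ioi (0:ℝ)), r < (a+b) * (1 + 1 * e) ^ (-α) :=
      hc.eventually_const_lt hr
    have hev3 : ∀ᶠ e in nhdsWithin (0:ℝ) (Ioi (0:ℝ)), 0 < e := by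
      filter_upwards [eventually_mem_nhdsWithin] with e he using he
    obtain ⟨ε, hεr, hε0⟩ := (hev1.and hev3).exists
    rw [one_mul] at hεr
    have h1ε : (0:ℝ) < 1 + ε := by linarith
    have hA := aux_tail_scaled μ X α ℓ hℓpos hslow a hXt h1ε
    have hB := aux_tail_scaled μ Z α ℓ hℓpos hslow b hZt h1ε
    have hqZ : Tendsto (fun x : ℝ => (μ {ω | -(ε*x) < Z ω}).toReal) atTop (nhds 1) :=
      (aux_low_one μ hZm).comp (tendsto_neg_atBot_iff.mpr (tendsto_id.const_mul_atTop hε0))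
    have hqX : Tendsto (fun x : ℝ => (μ {ω | -(ε*x) < X ω}).toReal) atTop (nhds 1) :=
      (aux_low_one μ hXm).comp (tendsto_neg_atBot_iff.mpr (tendsto_id.const_mul_atTop hε0))
    have hDZ : Tendsto (fun x : ℝ => (μ {ω | (1+ε)*x < Z ω}).toReal) atTop (nhds 0) :=
      (aux_tail_zero μ hZm).comp (tendsto_id.const_mul_atTop h1ε)
    have hLo := ((hA.mul hqZ).add (hB.mul hqX)).sub (hA.mul hDZ)
    have heq : (a * (1+ε) ^ (-α) * 1 + b * (1+ε) ^ (-α) * 1) - a * (1+ε) ^ (-α) * 0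
        = (a+b) * (1+ε) ^ (-α) := by ring
    rw [heq] at hLo
    have hLor := hLo.eventually_const_lt hεr
    filter_upwards [hLor, eventually_gt_atTop (0:ℝ)] with x hLx hx
    have hfpos : (0:ℝ) < ℓ x * x ^ (-α) := by
      have := hℓpos x hx
      have := Real.rpow_pos_of_pos hx (-α)
      positivity
    -- sets
    set A1 : Set Ω := {ω | (1+ε)*x < X ω} with hA1
    set A2 : Set Ω := {ω | -(ε*x) < Z ω} with hA2
    set B1 : Set Ω := {ω | (1+ε)*x < Z ω} with hB1
    set B2 : Set Ω := {ω | -(ε*x) < X ω} with hB2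
    have hmA1 : MeasurableSet A1 := measurableSet_lt measurable_const hXm
    have hmA2 : MeasurableSet A2 := measurableSet_lt measurable_const hZm
    have hmB1 : MeasurableSet B1 := measurableSet_lt measurable_const hZm
    have hmB2 : MeasurableSet B2 := measurableSet_lt measurable_const hXm
    have hsub : (A1 ∩ A2) ∪ (B1 ∩ B2) ⊆ {ω | x < X ω + Z ω} := by
      rintro ω (⟨h1, h2⟩ | ⟨h1, h2⟩) <;>
        · simp only [hA1, hA2, hB1, hB2, mem_setOf_eq] at h1 h2 ⊢
          nlinarith
    -- independence products
    have hprodA : μ (A1 ∩ A2) = μ A1 * μ A2 := by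
      have := hind.measure_inter_preimage_eq_mul (Ioi ((1+ε)*x)) (Ioi (-(ε*x)))
        measurableSet_Ioi measurableSet_Ioi
      exact this
    have hprodB : μ (B1 ∩ B2) = μ B1 * μ B2 := by
      have := hind.measure_inter_preimage_eq_mul (Ioi (-(ε*x))) (Ioi ((1+ε)*x))
        measurableSet_Ioi measurableSet_Ioi
      rw [inter_comm] at this
      rw [mul_comm]
      exact this
    have hprodC : μ (A1 ∩ B1) = μ A1 * μ B1 := by
      have := hind.measure_inter_preimage_eq_mul (Ioi ((1+ε)*x)) (Ioi ((1+ε)*x))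
        measurableSet_Ioi measurableSet_Ioi
      exact this
    -- inclusion-exclusion (in ℝ)
    have hie : (μ ((A1 ∩ A2) ∪ (B1 ∩ B2))).toReal + (μ ((A1 ∩ A2) ∩ (B1 ∩ B2))).toReal
        = (μ (A1 ∩ A2)).toReal + (μ (B1 ∩ B2)).toReal := by
      have h := measure_union_add_inter (μ := μ) (A1 ∩ A2) (hmB1.inter hmB2)
      have := congrArg ENNReal.toReal h
      rwa [ENNReal.toReal_add (measure_ne_top _ _) (measure_ne_top _ _),
        ENNReal.toReal_add (measure_ne_top _ _) (measure_ne_top _ _)] at this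
    have hABsub : (A1 ∩ A2) ∩ (B1 ∩ B2) ⊆ A1 ∩ B1 := by
      rintro ω ⟨⟨h1, _⟩, ⟨h3, _⟩⟩; exact ⟨h1, h3⟩
    have hABle : (μ ((A1 ∩ A2) ∩ (B1 ∩ B2))).toReal ≤ (μ A1).toReal * (μ B1).toReal := by
      rw [← ENNReal.toReal_mul, ← hprodC]
      exact ENNReal.toReal_mono (measure_ne_top _ _) (measure_mono hABsub)
    have hSge : (μ ((A1 ∩ A2) ∪ (B1 ∩ B2))).toReal ≤ (μ {ω | x < X ω + Z ω}).toReal :=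
      ENNReal.toReal_mono (measure_ne_top _ _) (measure_mono hsub)
    have hnum : (μ A1).toReal * (μ A2).toReal + (μ B1).toReal * (μ B2).toReal
        - (μ A1).toReal * (μ B1).toReal ≤ (μ {ω | x < X ω + Z ω}).toReal := by
      have e1 : (μ (A1 ∩ A2)).toReal = (μ A1).toReal * (μ A2).toReal := by
        rw [hprodA, ENNReal.toReal_mul]
      have e2 : (μ (B1 ∩ B2)).toReal = (μ B1).toReal * (μ B2).toReal := by
        rw [hprodB, ENNReal.toReal_mul]
      linarith
    -- conclude
    have hdiv : ((μ A1).toReal * (μ A2).toReal + (μ B1).toReal * (μ B2).toReal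
        - (μ A1).toReal * (μ B1).toReal) / (ℓ x * x ^ (-α))
        ≤ (μ {ω | x < X ω + Z ω}).toReal / (ℓ x * x ^ (-α)) :=
      by gcongr
    calc r < (μ A1).toReal / (ℓ x * x ^ (-α)) * (μ A2).toReal
            + (μ B1).toReal / (ℓ x * x ^ (-α)) * (μ B2).toReal
            - (μ A1).toReal / (ℓ x * x ^ (-α)) * (μ B1).toReal := hLx
      _ = ((μ A1).toReal * (μ A2).toReal + (μ B1).toReal * (μ B2).toReal
            - (μ A1).toReal * (μ B1).toReal) / (ℓ x * x ^ (-α)) := by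
          field_simp
      _ ≤ _ := hdiv
  · -- upper bound
    intro r hr
    have hc : Tendsto (fun e : ℝ => (a+b) * (1 + (-1) * e) ^ (-α)) (nhdsWithin (0:ℝ) (Ioi (0:ℝ))) (nhds (a+b)) :=
      (aux_cont (a+b) α (-1)).mono_left nhdsWithin_le_nhds
    have hev1 : ∀ᶠ e in nhdsWithin (0:ℝ) (Ioi (0:ℝ)), (a+b) * (1 + (-1) * e) ^ (-α) < r :=
      hc.eventually_lt_const hr
    have hev2 : ∀ᶠ e in nhdsWithin (0:ℝ) (Ioi (0:ℝ)), e < 1 :=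
      eventually_nhdsWithin_of_eventually_nhds (eventually_lt_nhds zero_lt_one)
    have hev3 : ∀ᶠ e in nhdsWithin (0:ℝ) (Ioi (0:ℝ)), 0 < e := by
      filter_upwards [eventually_mem_nhdsWithin] with e he using he
    obtain ⟨ε, ⟨⟨hεr, hε1⟩, hε0⟩⟩ := ((hev1.and hev2).and hev3).exists
    have h1ε : (0:ℝ) < 1 - ε := by linarith
    have hεrr : (a+b) * (1-ε) ^ (-α) < r := by
      have : (1:ℝ) + (-1)*ε = 1 - ε := by ring
      rwa [this] at hεr
    have hA := aux_tail_scaled μ X α ℓ hℓpos hslow a hXt h1ε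
    have hB := aux_tail_scaled μ Z α ℓ hℓpos hslow b hZt h1ε
    have hC := aux_tail_scaled μ X α ℓ hℓpos hslow a hXt hε0
    have hD : Tendsto (fun x : ℝ => (μ {ω | ε*x < Z ω}).toReal) atTop (nhds 0) :=
      (aux_tail_zero μ hZm).comp (tendsto_id.const_mul_atTop hε0)
    have hU := (hA.add hB).add (hC.mul hD)
    have heq : (a * (1-ε) ^ (-α) + b * (1-ε) ^ (-α)) + a * ε ^ (-α) * 0
        = (a+b) * (1-ε) ^ (-α) := by ring
    rw [heq] at hU
    have hUr := hU.eventually_lt_const hεrr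
    filter_upwards [hUr, eventually_gt_atTop (0:ℝ)] with x hUx hx
    have hfpos : (0:ℝ) < ℓ x * x ^ (-α) := by
      have := hℓpos x hx
      have := Real.rpow_pos_of_pos hx (-α)
      positivity
    set A : Set Ω := {ω | (1-ε)*x < X ω} with hA'
    set B : Set Ω := {ω | (1-ε)*x < Z ω} with hB'
    set C : Set Ω := {ω | ε*x < X ω} with hC'
    set D : Set Ω := {ω | ε*x < Z ω} with hD'
    have hsub : {ω | x < X ω + Z ω} ⊆ (A ∪ B) ∪ (C ∩ D) := by
      intro ω hω
      simp only [hA', hB', hC', hD', mem_setOf_eq, mem_union, mem_inter_iff] at hω ⊢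
      by_cases h1 : (1-ε)*x < X ω
      · exact Or.inl (Or.inl h1)
      by_cases h2 : (1-ε)*x < Z ω
      · exact Or.inl (Or.inr h2)
      push_neg at h1 h2
      exact Or.inr ⟨by nlinarith, by nlinarith⟩
    have hprodCD : μ (C ∩ D) = μ C * μ D := by
      have := hind.measure_inter_preimage_eq_mul (Ioi (ε*x)) (Ioi (ε*x))
        measurableSet_Ioi measurableSet_Ioi
      exact this
    have hle : μ {ω | x < X ω + Z ω} ≤ μ A + μ B + μ C * μ D := by
      calc μ {ω | x < X ω + Z ω} ≤ μ ((A ∪ B) ∪ (C ∩ D)) := measure_mono hsub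
        _ ≤ μ (A ∪ B) + μ (C ∩ D) := measure_union_le _ _
        _ ≤ (μ A + μ B) + μ C * μ D := by
            rw [hprodCD]
            exact add_le_add (measure_union_le _ _) le_rfl
    have hle' : (μ {ω | x < X ω + Z ω}).toReal
        ≤ (μ A).toReal + (μ B).toReal + (μ C).toReal * (μ D).toReal := by
      have hfin : μ A + μ B + μ C * μ D ≠ ⊤ := by
        refine ENNReal.add_ne_top.2 ⟨ENNReal.add_ne_top.2 ⟨?_, ?_⟩, ?_⟩ <;>
          first
          | exact measure_ne_top _ _
          | exact ENNReal.mul_ne_top (measure_ne_top _ _) (measure_ne_top _ _)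
      have := ENNReal.toReal_mono hfin hle
      rwa [ENNReal.toReal_add (by finiteness) (by finiteness),
        ENNReal.toReal_add (by finiteness) (by finiteness), ENNReal.toReal_mul] at this
    calc (μ {ω | x < X ω + Z ω}).toReal / (ℓ x * x ^ (-α))
        ≤ ((μ A).toReal + (μ B).toReal + (μ C).toReal * (μ D).toReal) / (ℓ x * x ^ (-α)) := by
          gcongr
      _ = (μ A).toReal / (ℓ x * x ^ (-α)) + (μ B).toReal / (ℓ x * x ^ (-α))
            + (μ C).toReal / (ℓ x * x ^ (-α)) * (μ D).toReal := by
          field_simp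
      _ < r := hUx

/-- tail of a positive multiple -/
lemma aux_mul (μ : Measure Ω) (Z : Ω → ℝ) (α : ℝ)
    (ℓ : ℝ → ℝ) (hℓpos : ∀ x : ℝ, 0 < x → 0 < ℓ x)
    (hslow : ∀ d : ℝ, 0 < d → Tendsto (fun x : ℝ => ℓ (d * x) / ℓ x) atTop (nhds 1))
    (c : ℝ)
    (hT : Tendsto (fun x : ℝ => (μ {ω | x < Z ω}).toReal / (ℓ x * x ^ (-α))) atTop (nhds c))
    {b : ℝ} (hb : 0 < b) :
    Tendsto (fun x : ℝ => (μ {ω | x < b * Z ω}).toReal / (ℓ x * x ^ (-α))) atTop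
      (nhds (c * b ^ α)) := by
  have hbinv : (0:ℝ) < b⁻¹ := by positivity
  have h := aux_tail_scaled μ Z α ℓ hℓpos hslow c hT hbinv
  have hseteq : ∀ x : ℝ, {ω | b⁻¹ * x < Z ω} = {ω | x < b * Z ω} := by
    intro x; ext ω; simp only [mem_setOf_eq]
    rw [inv_mul_lt_iff₀ hb]
  have hexp : (b⁻¹) ^ (-α) = b ^ α := by
    rw [Real.inv_rpow hb.le, Real.rpow_neg hb.le, inv_inv]
  simp only [hseteq, hexp] at h
  exact h

end Auxiliary

/-- tail equivalence of positive linear combinations of independent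
regularly varying random variables with comparable upper tails. -/
theorem tail_of_positive_linear_combination
    {Ω : Type*} [MeasurableSpace Ω] (μ : Measure Ω) [IsProbabilityMeasure μ]
    (m : ℕ) (hm : 1 ≤ m)
    (Y : Fin m → Ω → ℝ) (hYmeas : ∀ h, Measurable (Y h))
    (hYindep : ProbabilityTheory.iIndepFun Y μ)
    (α : ℝ) (hα : 0 < α)
    (ℓ : ℝ → ℝ) (hℓmeas : Measurable ℓ) (hℓpos : ∀ x : ℝ, 0 < x → 0 < ℓ x)
    (hslow : ∀ d : ℝ, 0 < d →
      Tendsto (fun x : ℝ => ℓ (d * x) / ℓ x) atTop (nhds 1))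
    (c : Fin m → ℝ) (hc : ∀ h, 0 < c h)
    (htail : ∀ h, Tendsto (fun x : ℝ => (μ {ω | x < Y h ω}).toReal / (ℓ x * x ^ (-α)))
      atTop (nhds (c h)))
    (β : Fin m → ℝ) (hβ : ∀ h, 0 < β h) :
    Tendsto (fun x : ℝ =>
        (μ {ω | x < ∑ h, β h * Y h ω}).toReal / (ℓ x * x ^ (-α)))
      atTop (nhds (∑ h, c h * β h ^ α)) := by
  have hgmeas : ∀ h : Fin m, Measurable (fun ω => β h * Y h ω) :=
    fun h => (hYmeas h).const_mul _
  have hgind : ProbabilityTheory.iIndepFun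
      (fun h => fun ω => β h * Y h ω) μ :=
    hYindep.comp (fun h t => β h * t) (fun h => measurable_const_mul _)
  have hgtail : ∀ h : Fin m, Tendsto
      (fun x : ℝ => (μ {ω | x < β h * Y h ω}).toReal / (ℓ x * x ^ (-α))) atTop
      (nhds (c h * β h ^ α)) :=
    fun h => aux_mul μ (Y h) α ℓ hℓpos hslow (c h) (htail h) (hβ h)
  have key : ∀ s : Finset (Fin m), s.Nonempty → Tendsto
      (fun x : ℝ => (μ {ω | x < ∑ h ∈ s, β h * Y h ω}).toReal / (ℓ x * x ^ (-α))) atTop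
      (nhds (∑ h ∈ s, c h * β h ^ α)) := by
    intro s hs
    induction hs using Finset.Nonempty.cons_induction with
    | singleton a => simpa using hgtail a
    | cons a s ha hs ih =>
      have hZm : Measurable (fun ω => ∑ h ∈ s, β h * Y h ω) :=
        Finset.measurable_sum s (fun i _ => hgmeas i)
      have hind : ProbabilityTheory.IndepFun (fun ω => β a * Y a ω)
          (fun ω => ∑ h ∈ s, β h * Y h ω) μ := by
        have h := (hgind.indepFun_finsetSum_of_notMem hgmeas ha).symm
        have heq : (∑ j ∈ s, (fun h => fun ω => β h * Y h ω) j)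
            = fun ω => ∑ j ∈ s, β j * Y j ω := by
          funext ω; simp [Finset.sum_apply]
        rwa [heq] at h
      have := aux_two μ (fun ω => β a * Y a ω) (fun ω => ∑ h ∈ s, β h * Y h ω)
        (hgmeas a) hZm hind α hα ℓ hℓpos hslow _ _ (hgtail a) ih
      simpa [Finset.sum_cons, Finset.sum_insert ha] using this
  have huniv : (Finset.univ : Finset (Fin m)).Nonempty :=
    ⟨⟨0, hm⟩, Finset.mem_univ _⟩
  exact key Finset.univ huniv
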